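/- Let Ω₁, Ω₂ ⊆ ℝ^n be nonempty open sets, let f : Ω₁ ∪ Ω₂ ∪ (Ω₁ + Ω₂) → ℝ^m be a Fréchet differentiable function such that f(Ω₁) and f(Ω₂) are open, and assume there exists a Fréchet differentiable function g : f(Ω₁) × f(Ω₂) → ℝ^m such that f(x + y) = g(f(x), f(y)) for all (x, y) ∈ Ω₁ × Ω₂. If d : ℝ → ℝ is an additive function which is a derivation with respect to f, then d is a derivation with respect to g on f(Ω₁) × f(Ω₂). -/

import Mathlib

open Pointwise

/-- If `f` satisfies the addition theorem `f(x+y) = g(f(x), f(y))` and the additive function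
`d` is a derivation with respect to `f`, then `d` is a derivation with respect to `g` on
`f(Ω₁) × f(Ω₂)`. -/
theorem stmt_3 (d : ℝ → ℝ) (n m : ℕ) (hn : 0 < n) (hm : 0 < m)
    (Ω₁ Ω₂ : Set (Fin n → ℝ))
    (hΩ₁open : IsOpen Ω₁) (hΩ₁ne : Ω₁.Nonempty)
    (hΩ₂open : IsOpen Ω₂) (hΩ₂ne : Ω₂.Nonempty)
    (f : (Fin n → ℝ) → Fin m → ℝ)
    (g : ((Fin m → ℝ) × (Fin m → ℝ)) → Fin m → ℝ)
    (hf : ∀ x ∈ Ω₁ ∪ Ω₂ ∪ (Ω₁ + Ω₂), DifferentiableAt ℝ f x)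
    (hfΩ₁ : IsOpen (f '' Ω₁)) (hfΩ₂ : IsOpen (f '' Ω₂))
    (hg : ∀ w ∈ (f '' Ω₁) ×ˢ (f '' Ω₂), DifferentiableAt ℝ g w)
    (haddth : ∀ x ∈ Ω₁, ∀ y ∈ Ω₂, f (x + y) = g (f x, f y))
    (hadd : ∀ x y : ℝ, d (x + y) = d x + d y)
    (hdf : ∀ x ∈ Ω₁ ∪ Ω₂ ∪ (Ω₁ + Ω₂),
      (fun j => d (f x j)) = fderiv ℝ f x (fun i => d (x i))) :
    ∀ u ∈ f '' Ω₁, ∀ v ∈ f '' Ω₂,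
      (fun j => d (g (u, v) j)) =
        fderiv ℝ g (u, v) ((fun i => d (u i)), (fun i => d (v i))) := by
  rintro u ⟨x, hx, rfl⟩ v ⟨y, hy, rfl⟩
  have hxm : x ∈ Ω₁ ∪ Ω₂ ∪ (Ω₁ + Ω₂) := Or.inl (Or.inl hx)
  have hym : y ∈ Ω₁ ∪ Ω₂ ∪ (Ω₁ + Ω₂) := Or.inl (Or.inr hy)
  have hxym : x + y ∈ Ω₁ ∪ Ω₂ ∪ (Ω₁ + Ω₂) := Or.inr (Set.add_mem_add hx hy)
  have hgd : DifferentiableAt ℝ g (f x, f y) :=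
    hg _ ⟨⟨x, hx, rfl⟩, ⟨y, hy, rfl⟩⟩
  set G := fderiv ℝ g (f x, f y) with hG
  set F := fderiv ℝ f (x + y) with hF
  -- derivative of x' ↦ f (x' + y) at x is F
  have h1 : HasFDerivAt (fun x' => f (x' + y))
      (F.comp (ContinuousLinearMap.id ℝ _)) x :=
    (hf _ hxym).hasFDerivAt.comp x ((hasFDerivAt_id x).add_const y)
  have h2 : HasFDerivAt (fun x' => g (f x', f y))
      (G.comp ((fderiv ℝ f x).prod 0)) x :=
    hgd.hasFDerivAt.comp x (HasFDerivAt.prodMk ((hf x hxm).hasFDerivAt) (hasFDerivAt_const (f y) x))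
  have hev1 : (fun x' => f (x' + y)) =ᶠ[nhds x] fun x' => g (f x', f y) := by
    filter_upwards [hΩ₁open.mem_nhds hx] with z hz using haddth z hz y hy
  have eqA : F.comp (ContinuousLinearMap.id ℝ _) = G.comp ((fderiv ℝ f x).prod 0) :=
    (h1.congr_of_eventuallyEq hev1.symm).unique h2
  -- derivative of y' ↦ f (x + y') at y is F
  have h3 : HasFDerivAt (fun y' => f (x + y'))
      (F.comp (ContinuousLinearMap.id ℝ _)) y :=
    (hf _ hxym).hasFDerivAt.comp y ((hasFDerivAt_id y).const_add x)
  have h4 : HasFDerivAt (fun y' => g (f x, f y'))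
      (G.comp (ContinuousLinearMap.prod 0 (fderiv ℝ f y))) y :=
    hgd.hasFDerivAt.comp y (HasFDerivAt.prodMk (hasFDerivAt_const (f x) y) ((hf y hym).hasFDerivAt))
  have hev2 : (fun y' => f (x + y')) =ᶠ[nhds y] fun y' => g (f x, f y') := by
    filter_upwards [hΩ₂open.mem_nhds hy] with z hz using haddth x hx z hz
  have eqB : F.comp (ContinuousLinearMap.id ℝ _)
      = G.comp (ContinuousLinearMap.prod 0 (fderiv ℝ f y)) :=
    (h3.congr_of_eventuallyEq hev2.symm).unique h4
  have hdu : (fun j => d (f x j)) = fderiv ℝ f x (fun i => d (x i)) := hdf x hxm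
  have hdv : (fun j => d (f y j)) = fderiv ℝ f y (fun i => d (y i)) := hdf y hym
  have key : (fun j => d (f (x + y) j)) = F (fun i => d ((x + y) i)) := hdf _ hxym
  have hxy : (fun i => d ((x + y) i)) = (fun i => d (x i)) + (fun i => d (y i)) := by
    funext i
    simp [Pi.add_apply, hadd]
  calc (fun j => d (g (f x, f y) j))
      = (fun j => d (f (x + y) j)) := by rw [haddth x hx y hy]
    _ = F ((fun i => d (x i)) + (fun i => d (y i))) := by rw [key, hxy]
    _ = F (fun i => d (x i)) + F (fun i => d (y i)) := map_add F _ _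
    _ = G ((fderiv ℝ f x) (fun i => d (x i)), 0)
        + G (0, (fderiv ℝ f y) (fun i => d (y i))) := by
        have a1 := DFunLike.congr_fun eqA (fun i => d (x i))
        have a2 := DFunLike.congr_fun eqB (fun i => d (y i))
        simp only [ContinuousLinearMap.comp_apply, ContinuousLinearMap.id_apply,
          ContinuousLinearMap.prod_apply, ContinuousLinearMap.zero_apply] at a1 a2
        rw [a1, a2]
    _ = G ((fun i => d (f x i)), (fun i => d (f y i))) := by
        rw [← map_add, hdu, hdv]
        congr 1
        simp [Prod.ext_iff]
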